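/- arXiv:math/0201017 — 3 statements merged into one kernel-verified Lean document; each statement's English description precedes it below -/
import Mathlib

section
/- Let Γ be a finite set of labels with a fusion rule N : Γ → Γ → Γ → ℕ, a dimension function d : Γ → ℂ satisfying d(X)d(Y) = ∑_Z N(X,Y,Z) d(Z), and an S-function S : Γ → Γ → ℂ satisfying the Verlinde-type relation S(X,Y)·S(X,Z) = d(X)·∑_W N(Y,Z,W)·S(X,W) for all X,Y,Z ∈ Γ, with d(X) ≠ 0 for all X. Suppose K ⊆ Γ is closed under fusion (X,Y ∈ K and N(X,Y,Z) ≠ 0 implies Z ∈ K) and under duality, with dual satisfying N(Y,Z,W) = N(W̄,Z,Ȳ) and d(Ȳ)=d(Y). Then for every X ∈ Γ we have (∑_{Y∈K} d(Y)·S(X,Y)) · (S(X,Z) − d(X)·d(Z)) = 0 for all Z ∈ K. -/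
open Finset

/-- Lemma 2.10 abstraction: orthogonality relation for fusion data. -/
theorem stmt_0 {Γ : Type*} [Fintype Γ]
    (N : Γ → Γ → Γ → ℕ) (d : Γ → ℂ) (S : Γ → Γ → ℂ) (bar : Γ → Γ)
    (hdim : ∀ X Y, d X * d Y = ∑ Z, (N X Y Z : ℂ) * d Z)
    (hS : ∀ X Y Z, S X Y * S X Z = d X * ∑ W, (N Y Z W : ℂ) * S X W)
    (hd0 : ∀ X, d X ≠ 0)
    (K : Finset Γ)
    (hKfus : ∀ X Y Z, X ∈ K → Y ∈ K → N X Y Z ≠ 0 → Z ∈ K)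
    (hKdual : ∀ Y, Y ∈ K → bar Y ∈ K)
    (hNbar : ∀ Y Z W, N Y Z W = N (bar W) Z (bar Y))
    (hdbar : ∀ Y, d (bar Y) = d Y) :
    ∀ X, ∀ Z ∈ K, (∑ Y ∈ K, d Y * S X Y) * (S X Z - d X * d Z) = 0 := by
  classical
  -- hdim restricted to K
  have hdK : ∀ A ∈ K, ∀ B ∈ K, ∑ U ∈ K, (N A B U : ℂ) * d U = d A * d B := by
    intro A hA B hB
    rw [hdim A B]
    exact Finset.sum_subset (Finset.subset_univ K) (fun x _ hx => by
      have hz : N A B x = 0 := by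
        by_contra h
        exact hx (hKfus A B x hA hB h)
      simp [hz])
  -- hS restricted to K
  have hSK : ∀ X, ∀ A ∈ K, ∀ B ∈ K,
      S X A * S X B = d X * ∑ W ∈ K, (N A B W : ℂ) * S X W := by
    intro X A hA B hB
    rw [hS X A B]
    congr 1
    exact (Finset.sum_subset (Finset.subset_univ K) (fun x _ hx => by
      have hz : N A B x = 0 := by
        by_contra h
        exact hx (hKfus A B x hA hB h)
      simp [hz])).symm
  -- K closed under iterates of bar
  have hbarK : ∀ (r : ℕ) (W : Γ), W ∈ K → bar^[r] W ∈ K := by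
    intro r
    induction r with
    | zero => intro W hW; simpa using hW
    | succ n ih =>
      intro W hW
      rw [Function.iterate_succ_apply']
      exact hKdual _ (ih W hW)
  -- d constant along iterates of bar
  have hdIter : ∀ (r : ℕ) (A : Γ), d (bar^[r] A) = d A := by
    intro r
    induction r with
    | zero => intro A; simp
    | succ n ih =>
      intro A
      rw [Function.iterate_succ_apply', hdbar, ih]
  -- diagonal invariance under double bar
  have diag2 : ∀ Y Z W, N Y Z W = N (bar (bar Y)) Z (bar (bar W)) := by
    intro Y Z W
    rw [hNbar Y Z W, hNbar (bar W) Z (bar Y)]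
  -- diagonal invariance under even iterates
  have evenStrip : ∀ (j : ℕ) (Y Z W : Γ),
      N (bar^[2*j] Y) Z (bar^[2*j] W) = N Y Z W := by
    intro j
    induction j with
    | zero => intro Y Z W; simp
    | succ n ih =>
      intro Y Z W
      have hAe : ∀ A : Γ, bar^[2*(n+1)] A = bar^[2*n] (bar (bar A)) := by
        intro A
        have e : 2*(n+1) = 2*n + 2 := by ring
        rw [e, Function.iterate_add_apply]
        rfl
      rw [hAe Y, hAe W, ih (bar (bar Y)) Z (bar (bar W)), ← diag2]
  -- key identity for odd iterates with image third slot
  have keyOdd : ∀ (j : ℕ), ∀ Z ∈ K, ∀ V ∈ K,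
      ∑ U ∈ K, d U * (N (bar^[2*j+1] U) Z (bar^[2*j+1] V) : ℂ) = d Z * d V := by
    intro j Z hZ V hV
    have hpt : ∀ U : Γ, N (bar^[2*j+1] U) Z (bar^[2*j+1] V) = N V Z U := by
      intro U
      have h1 : bar^[2*j+1] U = bar^[2*j] (bar U) := Function.iterate_succ_apply bar (2*j) U
      have h2 : bar^[2*j+1] V = bar^[2*j] (bar V) := Function.iterate_succ_apply bar (2*j) V
      rw [h1, h2, evenStrip j (bar U) Z (bar V), ← hNbar V Z U]
    calc ∑ U ∈ K, d U * (N (bar^[2*j+1] U) Z (bar^[2*j+1] V) : ℂ)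
        = ∑ U ∈ K, (N V Z U : ℂ) * d U := by
          refine Finset.sum_congr rfl (fun U _ => ?_)
          rw [hpt U]; ring
      _ = d V * d Z := hdK V hV Z hZ
      _ = d Z * d V := by ring
  -- shift relation, pointwise
  have hshift : ∀ (a : ℕ) (U W Z : Γ),
      N (bar^[a] U) Z W = N (bar^[a+2] U) Z (bar (bar W)) := by
    intro a U W Z
    rw [hNbar (bar^[a] U) Z W, hNbar (bar W) Z (bar (bar^[a] U))]
    congr 2
    rw [show a + 2 = (a+1)+1 from rfl, Function.iterate_succ_apply',
      Function.iterate_succ_apply']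
  -- iterated shift for the twisted sum
  have G_iter : ∀ (Z : Γ) (j : ℕ) (W : Γ),
      (∑ U ∈ K, d U * (N (bar U) Z W : ℂ))
        = ∑ U ∈ K, d U * (N (bar^[2*j+1] U) Z (bar^[2*j] W) : ℂ) := by
    intro Z j
    induction j with
    | zero =>
      intro W
      simp
    | succ n ih =>
      intro W
      rw [ih W]
      refine Finset.sum_congr rfl (fun U _ => ?_)
      have eU : bar^[2*(n+1)+1] U = bar^[2*n+1+2] U := by
        rw [show 2*(n+1)+1 = 2*n+1+2 from by ring]
      have eW : bar^[2*(n+1)] W = bar (bar (bar^[2*n] W)) := by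
        rw [show 2*(n+1) = ((2*n)+1)+1 from by ring, Function.iterate_succ_apply',
          Function.iterate_succ_apply']
      rw [eU, eW, hshift (2*n+1) U (bar^[2*n] W) Z]
  -- the twisted key identity (★)
  have star : ∀ Z ∈ K, ∀ W ∈ K,
      ∑ U ∈ K, d U * (N (bar U) Z W : ℂ) = d Z * d W := by
    intro Z hZ W hW
    obtain ⟨a', b', hne, hfe⟩ :=
      Finite.exists_ne_map_eq_of_infinite (fun n : ℕ => bar^[n])
    obtain ⟨a, b, hab, hfe2⟩ : ∃ a b : ℕ, a < b ∧ (bar^[a] : Γ → Γ) = bar^[b] := by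
      rcases lt_or_gt_of_ne hne with h | h
      · exact ⟨a', b', h, by simpa using hfe⟩
      · exact ⟨b', a', h, by simpa using hfe.symm⟩
    have h2a : bar^[2*a] W = bar^[2*a+1] (bar^[b-a-1] W) := by
      calc bar^[2*a] W = bar^[a] (bar^[a] W) := by
            rw [two_mul, Function.iterate_add_apply]
        _ = bar^[b] (bar^[a] W) := congrFun hfe2 (bar^[a] W)
        _ = bar^[b+a] W := (Function.iterate_add_apply bar b a W).symm
        _ = bar^[(2*a+1)+(b-a-1)] W := by rw [show b + a = (2*a+1) + (b-a-1) from by omega]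
        _ = bar^[2*a+1] (bar^[b-a-1] W) := Function.iterate_add_apply bar (2*a+1) (b-a-1) W
    rw [G_iter Z a W, h2a, keyOdd a Z hZ (bar^[b-a-1] W) (hbarK _ _ hW),
      hdIter (b-a-1) W]
  -- main argument
  intro X Z hZ
  set T : ℂ := ∑ Y ∈ K, d Y * S X Y with hT
  set T1 : ℂ := ∑ Y ∈ K, d Y * S X (bar Y) with hT1
  have hC1 : ∀ B ∈ K, T1 * S X B = d X * d B * T := by
    intro B hB
    calc T1 * S X B = ∑ Y ∈ K, d Y * S X (bar Y) * S X B := by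
          rw [hT1, Finset.sum_mul]
      _ = ∑ Y ∈ K, ∑ W ∈ K, d Y * d X * ((N (bar Y) B W : ℂ) * S X W) := by
          refine Finset.sum_congr rfl (fun Y hY => ?_)
          rw [mul_assoc, hSK X (bar Y) (hKdual Y hY) B hB, Finset.mul_sum,
            Finset.mul_sum]
          refine Finset.sum_congr rfl (fun W _ => ?_)
          ring
      _ = ∑ W ∈ K, ∑ Y ∈ K, d Y * d X * ((N (bar Y) B W : ℂ) * S X W) :=
          Finset.sum_comm
      _ = ∑ W ∈ K, d X * ((∑ U ∈ K, d U * (N (bar U) B W : ℂ)) * S X W) := by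
          refine Finset.sum_congr rfl (fun W _ => ?_)
          rw [Finset.sum_mul, Finset.mul_sum]
          refine Finset.sum_congr rfl (fun Y _ => ?_)
          ring
      _ = ∑ W ∈ K, d X * ((d B * d W) * S X W) := by
          refine Finset.sum_congr rfl (fun W hW => ?_)
          rw [star B hB W hW]
      _ = d X * d B * T := by
          rw [hT, Finset.mul_sum]
          refine Finset.sum_congr rfl (fun W _ => ?_)
          ring
  have hT1T1 : T1 * T1 = d X * T * (∑ Y ∈ K, d Y * d Y) := by
    calc T1 * T1 = ∑ Y ∈ K, d Y * S X (bar Y) * T1 := by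
          nth_rewrite 1 [hT1]
          rw [Finset.sum_mul]
      _ = ∑ Y ∈ K, d Y * (T1 * S X (bar Y)) := by
          refine Finset.sum_congr rfl (fun Y _ => ?_); ring
      _ = ∑ Y ∈ K, d Y * (d X * d (bar Y) * T) := by
          refine Finset.sum_congr rfl (fun Y hY => ?_)
          rw [hC1 (bar Y) (hKdual Y hY)]
      _ = d X * T * (∑ Y ∈ K, d Y * d Y) := by
          rw [Finset.mul_sum]
          refine Finset.sum_congr rfl (fun Y _ => ?_)
          rw [hdbar Y]; ring
  have hT1T : T1 * T = d X * T * (∑ Y ∈ K, d Y * d Y) := by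
    calc T1 * T = ∑ Y ∈ K, d Y * (T1 * S X Y) := by
          rw [hT, Finset.mul_sum]
          refine Finset.sum_congr rfl (fun Y _ => ?_); ring
      _ = ∑ Y ∈ K, d Y * (d X * d Y * T) := by
          refine Finset.sum_congr rfl (fun Y hY => ?_)
          rw [hC1 Y hY]
      _ = d X * T * (∑ Y ∈ K, d Y * d Y) := by
          rw [Finset.mul_sum]
          refine Finset.sum_congr rfl (fun Y _ => ?_); ring
  by_cases h1 : T1 = 0
  · have hz := hC1 Z hZ
    rw [h1, zero_mul] at hz
    have hT0 : T = 0 := by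
      rcases mul_eq_zero.mp hz.symm with h | h
      · exact absurd h (mul_ne_zero (hd0 X) (hd0 Z))
      · exact h
    rw [hT0, zero_mul]
  · have hT1eqT : T1 = T := mul_left_cancel₀ h1 (by rw [hT1T1, hT1T])
    have hz := hC1 Z hZ
    rw [hT1eqT] at hz
    calc T * (S X Z - d X * d Z) = T * S X Z - d X * d Z * T := by ring
      _ = 0 := by rw [hz]; ring
end

section
/- Let n ≥ 1 and G = ℤ/2ⁿℤ. With Γ = G × G and pairing S((a,b),(c,d)) = ζ^{ad+bc}, ζ = e^{2πi/2ⁿ}: for every a, b ∈ ℤ/2ⁿℤ, the element (ja, jb) with j = 2^{n-1} satisfies j ≠ 0 and S((ja,jb),(ka,kb)) = 1 for all k ∈ ℤ/2ⁿℤ. Consequently, no cyclic subgroup of Γ of order 2ⁿ of the form {(ja,jb)} carries a nondegenerate restriction of S. -/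
/-- Computation of Theorem 4.6(i): in `(ℤ/2ⁿℤ)²` with pairing
`S((x,y),(u,v)) = ζ^(xv+yu)`, the element `j = 2^(n-1)` is nonzero and
`(ja, jb)` pairs trivially with all `(ka, kb)`, for every `a, b`. -/
theorem stmt_6 (n : ℕ) (hn : 1 ≤ n) :
    ((2 : ZMod (2 ^ n)) ^ (n - 1) ≠ 0) ∧
    ∀ a b k : ZMod (2 ^ n),
      Complex.exp (2 * Real.pi * Complex.I / (2 ^ n : ℕ)) ^
        (((2 : ZMod (2 ^ n)) ^ (n - 1) * a * (k * b) +
          (2 : ZMod (2 ^ n)) ^ (n - 1) * b * (k * a)).val) = 1 := by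
  constructor
  · have h : ((2 : ZMod (2 ^ n)) ^ (n - 1)) = ((2 ^ (n - 1) : ℕ) : ZMod (2 ^ n)) := by
      push_cast; ring
    rw [h, Ne, ZMod.natCast_eq_zero_iff]
    intro hdvd
    have := Nat.le_of_dvd (by positivity) hdvd
    have h2 : (2:ℕ) ^ n > 2 ^ (n - 1) := by
      exact Nat.pow_lt_pow_right (by norm_num) (Nat.sub_lt (by omega) one_pos)
    omega
  · intro a b k
    have hpow : (2 : ZMod (2 ^ n)) ^ n = 0 := by
      have : ((2 ^ n : ℕ) : ZMod (2 ^ n)) = 0 := ZMod.natCast_self _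
      push_cast at this
      exact this
    have hz : (2 : ZMod (2 ^ n)) ^ (n - 1) * a * (k * b) +
        (2 : ZMod (2 ^ n)) ^ (n - 1) * b * (k * a) = 0 := by
      have h1 : (2 : ZMod (2 ^ n)) ^ (n - 1) * 2 = 2 ^ n := by
        rw [← pow_succ]
        congr 1
        omega
      calc (2 : ZMod (2 ^ n)) ^ (n - 1) * a * (k * b) +
            (2 : ZMod (2 ^ n)) ^ (n - 1) * b * (k * a)
          = ((2 : ZMod (2 ^ n)) ^ (n - 1) * 2) * (a * b * k) := by ring
        _ = 0 := by rw [h1, hpow, zero_mul]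
    rw [hz, ZMod.val_zero, pow_zero]
end

section
/- Let n ≥ 2 and G = ℤ/2ⁿℤ, Γ = G × G with pairing S((a,b),(c,d)) = ζ^{ad+bc}, ζ = e^{2πi/2ⁿ}. Then Γ admits no subgroup K with 1 < |K| < |Γ| such that S restricts nondegenerately to K and Γ ≅ K × K^⊥. In particular, every subgroup K of Γ on which S is nondegenerate satisfies K = {0} or K = Γ. -/
private lemma stmt16_main (n : ℕ) (hn : 2 ≤ n)
    (K : AddSubgroup (ZMod (2 ^ n) × ZMod (2 ^ n)))
    (hK : ∀ x ∈ K, (∀ y ∈ K, x.1 * y.2 + x.2 * y.1 = 0) → x = 0) :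
    K = ⊥ ∨ K = ⊤ := by
  haveI : NeZero ((2:ℕ) ^ n) := ⟨pow_ne_zero _ two_ne_zero⟩
  set ε : ZMod (2 ^ n) →+* ZMod 2 :=
    ZMod.castHom (dvd_pow_self 2 (by omega : n ≠ 0)) (ZMod 2) with hεdef
  have htwo : ∀ x : ZMod 2, x = 0 ∨ x = 1 := by decide
  have hself : ∀ a : ZMod (2 ^ n), ((a.val : ℕ) : ZMod (2 ^ n)) = a := fun a => by
    rw [ZMod.natCast_val, ZMod.cast_id]
  have heps : ∀ a : ZMod (2 ^ n), ε a = ((a.val : ℕ) : ZMod 2) := fun a => by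
    rw [hεdef, ZMod.castHom_apply, ← ZMod.natCast_val]
  have heps0 : ∀ a : ZMod (2 ^ n), ε a = 0 ↔ 2 ∣ a.val := fun a => by
    rw [heps, ZMod.natCast_eq_zero_iff]
  -- powers of two vanish
  have hpow0 : ∀ m : ℕ, n ≤ m → (2 : ZMod (2 ^ n)) ^ m = 0 := by
    intro m hm
    have h := (ZMod.natCast_eq_zero_iff (2 ^ m) (2 ^ n)).2 (pow_dvd_pow 2 hm)
    push_cast at h
    exact h
  -- divisibility characterization of annihilators
  have hdvd : ∀ m : ℕ, m ≤ n → ∀ a : ZMod (2 ^ n),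
      ((2 : ZMod (2 ^ n)) ^ m * a = 0 ↔ ∃ c : ZMod (2 ^ n), a = 2 ^ (n - m) * c) := by
    intro m hm a
    constructor
    · intro h
      have h1 : (2 : ZMod (2 ^ n)) ^ m * a = ((2 ^ m * a.val : ℕ) : ZMod (2 ^ n)) := by
        push_cast [hself]
        ring
      rw [h1, ZMod.natCast_eq_zero_iff] at h
      have h2 : (2 : ℕ) ^ n = 2 ^ m * 2 ^ (n - m) := by
        rw [← pow_add]; congr 1; omega
      obtain ⟨k, hk⟩ := h
      have hc : a.val = 2 ^ (n - m) * k := by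
        have h3 : 2 ^ m * a.val = 2 ^ m * (2 ^ (n - m) * k) := by
          rw [hk, h2, mul_assoc]
        exact Nat.eq_of_mul_eq_mul_left (pow_pos two_pos m) h3
      have hc2 : (2:ℕ) ^ (n - m) ∣ a.val := ⟨k, hc⟩
      obtain ⟨c, hc⟩ := hc2
      refine ⟨(c : ZMod (2 ^ n)), ?_⟩
      rw [← hself a, hc]
      push_cast
      ring
    · rintro ⟨c, rfl⟩
      rw [← mul_assoc, ← pow_add, hpow0 (m + (n - m)) (by omega), zero_mul]
  -- even elements
  have heven : ∀ a : ZMod (2 ^ n), ε a = 0 ↔ ∃ c, a = 2 * c := by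
    intro a
    constructor
    · intro h
      obtain ⟨k, hk⟩ := (heps0 a).1 h
      refine ⟨(k : ZMod (2 ^ n)), ?_⟩
      rw [← hself a, hk]; push_cast; ring
    · rintro ⟨c, rfl⟩
      rw [map_mul]
      have h2 : ε 2 = 0 := by
        rw [show (2 : ZMod (2 ^ n)) = ((2 : ℕ) : ZMod (2 ^ n)) by push_cast; rfl,
          map_natCast]
        decide
      rw [h2, zero_mul]
  -- odd elements are units
  have hunit : ∀ a : ZMod (2 ^ n), ε a = 1 → IsUnit a := by
    intro a h
    have hodd : ¬ 2 ∣ a.val := by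
      intro hd
      rw [(heps0 a).2 hd] at h
      exact absurd h (by decide)
    rw [← hself a, ZMod.isUnit_iff_coprime]
    exact Nat.Coprime.pow_right _ (Nat.coprime_two_right.2 (Nat.odd_iff.2 (by omega)))
  -- 2^(n-1) times an odd element is nonzero
  have hodd_ne : ∀ a : ZMod (2 ^ n), ε a = 1 → (2 : ZMod (2 ^ n)) ^ (n - 1) * a ≠ 0 := by
    intro a ha h
    obtain ⟨c, hc⟩ := (hdvd (n - 1) (by omega) a).1 h
    rw [show n - (n - 1) = 1 by omega, pow_one] at hc
    rw [(heven a).2 ⟨c, hc⟩] at ha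
    exact absurd ha (by decide)
  -- even elements are killed by 2^(n-1)
  have heven_zero : ∀ a : ZMod (2 ^ n), ε a = 0 → (2 : ZMod (2 ^ n)) ^ (n - 1) * a = 0 := by
    intro a ha
    obtain ⟨c, hc⟩ := (heven a).1 ha
    refine (hdvd (n - 1) (by omega) a).2 ⟨c, ?_⟩
    rw [show n - (n - 1) = 1 by omega, pow_one]; exact hc
  -- scalar multiples stay in K
  have hsmul : ∀ (c : ZMod (2 ^ n)) (y : ZMod (2 ^ n) × ZMod (2 ^ n)),
      y ∈ K → (c * y.1, c * y.2) ∈ K := by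
    intro c y hy
    have h1 : (c * y.1, c * y.2) = c.val • y := by
      rw [← Nat.cast_smul_eq_nsmul (ZMod (2 ^ n)), hself]
      rfl
    rw [h1]
    exact K.nsmul_mem hy _
  -- spanning lemma: two elements with unit determinant generate everything
  have span : ∀ y ∈ K, ∀ z ∈ K, IsUnit (y.1 * z.2 - y.2 * z.1) → K = ⊤ := by
    intro y hy z hz hu
    rw [eq_top_iff]
    rintro p -
    obtain ⟨D, hD⟩ : ∃ D, D * (y.1 * z.2 - y.2 * z.1) = 1 :=
      ⟨_, ZMod.inv_mul_of_unit _ hu⟩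
    have hp : p = ((D * (p.1 * z.2 - p.2 * z.1)) * y.1 + (D * (p.2 * y.1 - p.1 * y.2)) * z.1,
        (D * (p.1 * z.2 - p.2 * z.1)) * y.2 + (D * (p.2 * y.1 - p.1 * y.2)) * z.2) := by
      rw [Prod.ext_iff]
      refine ⟨?_, ?_⟩
      · show p.1 = _
        linear_combination (-p.1) * hD
      · show p.2 = _
        linear_combination (-p.2) * hD
    rw [hp]
    exact K.add_mem (hsmul _ y hy) (hsmul _ z hz)
  -- main case analysis
  by_cases hA : ∃ y ∈ K, ε (y.1 + y.2) = 1
  · right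
    obtain ⟨y, hyK, hy⟩ := hA
    rw [map_add] at hy
    rcases htwo (ε y.1) with h1 | h1
    · -- y.1 even, y.2 odd
      have h2 : ε y.2 = 1 := by rwa [h1, zero_add] at hy
      by_cases hB : ∃ z ∈ K, ε z.1 = 1
      · obtain ⟨z, hzK, hz1⟩ := hB
        refine span z hzK y hyK ?_
        apply hunit
        rw [map_sub, map_mul, map_mul, hz1, h2, h1, one_mul, mul_zero, sub_zero]
      · push_neg at hB
        exfalso
        have htK : ((2 : ZMod (2 ^ n)) ^ (n - 1) * y.1, (2 : ZMod (2 ^ n)) ^ (n - 1) * y.2)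
            ∈ K := hsmul _ y hyK
        have htzero := hK _ htK ?_
        · exact hodd_ne y.2 h2 (congrArg Prod.snd htzero)
        · intro z hzK
          have hz1 : ε z.1 = 0 := (htwo _).resolve_right (hB z hzK)
          show (2 : ZMod (2 ^ n)) ^ (n - 1) * y.1 * z.2
              + (2 : ZMod (2 ^ n)) ^ (n - 1) * y.2 * z.1 = 0
          have e1 : (2 : ZMod (2 ^ n)) ^ (n - 1) * y.1 * z.2
              + (2 : ZMod (2 ^ n)) ^ (n - 1) * y.2 * z.1
              = z.2 * ((2 : ZMod (2 ^ n)) ^ (n - 1) * y.1)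
              + y.2 * ((2 : ZMod (2 ^ n)) ^ (n - 1) * z.1) := by ring
          rw [e1, heven_zero y.1 h1, heven_zero z.1 hz1, mul_zero, mul_zero, add_zero]
    · -- y.1 odd, y.2 even
      have h2 : ε y.2 = 0 := by
        rcases htwo (ε y.2) with h | h
        · exact h
        · rw [h1, h] at hy; exact absurd hy (by decide)
      by_cases hB : ∃ z ∈ K, ε z.2 = 1
      · obtain ⟨z, hzK, hz2⟩ := hB
        refine span y hyK z hzK ?_
        apply hunit
        rw [map_sub, map_mul, map_mul, h1, hz2, h2, one_mul, zero_mul, sub_zero]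
      · push_neg at hB
        exfalso
        have htK : ((2 : ZMod (2 ^ n)) ^ (n - 1) * y.1, (2 : ZMod (2 ^ n)) ^ (n - 1) * y.2)
            ∈ K := hsmul _ y hyK
        have htzero := hK _ htK ?_
        · exact hodd_ne y.1 h1 (congrArg Prod.fst htzero)
        · intro z hzK
          have hz2 : ε z.2 = 0 := (htwo _).resolve_right (hB z hzK)
          show (2 : ZMod (2 ^ n)) ^ (n - 1) * y.1 * z.2
              + (2 : ZMod (2 ^ n)) ^ (n - 1) * y.2 * z.1 = 0
          have e1 : (2 : ZMod (2 ^ n)) ^ (n - 1) * y.1 * z.2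
              + (2 : ZMod (2 ^ n)) ^ (n - 1) * y.2 * z.1
              = y.1 * ((2 : ZMod (2 ^ n)) ^ (n - 1) * z.2)
              + z.1 * ((2 : ZMod (2 ^ n)) ^ (n - 1) * y.2) := by ring
          rw [e1, heven_zero z.2 hz2, heven_zero y.2 h2, mul_zero, mul_zero, add_zero]
  · -- all elements have even coordinate sum
    push_neg at hA
    have hsum0 : ∀ y ∈ K, ε y.1 + ε y.2 = 0 := by
      intro y hy
      have := (htwo (ε (y.1 + y.2))).resolve_right (hA y hy)
      rwa [map_add] at this
    by_cases hB : ∃ u ∈ K, ε u.1 = 1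
    · exfalso
      obtain ⟨u, huK, hu1⟩ := hB
      have hu2 : ε u.2 = 1 := by
        have := hsum0 u huK
        rw [hu1] at this
        rcases htwo (ε u.2) with h | h
        · rw [h] at this; exact absurd this (by decide)
        · exact h
      have htK : ((2 : ZMod (2 ^ n)) ^ (n - 1) * u.1, (2 : ZMod (2 ^ n)) ^ (n - 1) * u.2)
          ∈ K := hsmul _ u huK
      have htzero := hK _ htK ?_
      · exact hodd_ne u.1 hu1 (congrArg Prod.fst htzero)
      · intro z hzK
        show (2 : ZMod (2 ^ n)) ^ (n - 1) * u.1 * z.2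
            + (2 : ZMod (2 ^ n)) ^ (n - 1) * u.2 * z.1 = 0
        have e1 : (2 : ZMod (2 ^ n)) ^ (n - 1) * u.1 * z.2
            + (2 : ZMod (2 ^ n)) ^ (n - 1) * u.2 * z.1
            = (2 : ZMod (2 ^ n)) ^ (n - 1) * (u.1 * z.2 + u.2 * z.1) := by ring
        have e2 : ε (u.1 * z.2 + u.2 * z.1) = 0 := by
          rw [map_add, map_mul, map_mul, hu1, hu2, one_mul, one_mul, add_comm]
          exact hsum0 z hzK
        rw [e1, heven_zero _ e2]
    · -- all coordinates even: descent to K = ⊥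
      left
      push_neg at hB
      have hcoord : ∀ y ∈ K, ε y.1 = 0 ∧ ε y.2 = 0 := by
        intro y hyK
        have h1 : ε y.1 = 0 := (htwo _).resolve_right (hB y hyK)
        have h2 : ε y.2 = 0 := by
          have := hsum0 y hyK
          rwa [h1, zero_add] at this
        exact ⟨h1, h2⟩
      have step : ∀ m : ℕ, 1 ≤ m → m ≤ n - 1 →
          (∀ y ∈ K, (2 : ZMod (2 ^ n)) ^ m * y.1 = 0 ∧ (2 : ZMod (2 ^ n)) ^ m * y.2 = 0) →
          (∀ y ∈ K, (2 : ZMod (2 ^ n)) ^ (m - 1) * y.1 = 0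
            ∧ (2 : ZMod (2 ^ n)) ^ (m - 1) * y.2 = 0) := by
        intro m hm1 hm2 H y hyK
        have hxK : ((2 : ZMod (2 ^ n)) ^ (m - 1) * y.1, (2 : ZMod (2 ^ n)) ^ (m - 1) * y.2)
            ∈ K := hsmul _ y hyK
        have hmain : ∀ a b : ZMod (2 ^ n), (2 : ZMod (2 ^ n)) ^ m * a = 0 →
            (2 : ZMod (2 ^ n)) ^ m * b = 0 →
            (2 : ZMod (2 ^ n)) ^ (m - 1) * (a * b) = 0 := by
          intro a b ha hb
          obtain ⟨c, rfl⟩ := (hdvd m (by omega) a).1 ha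
          obtain ⟨d, rfl⟩ := (hdvd m (by omega) b).1 hb
          have e : (2 : ZMod (2 ^ n)) ^ (m - 1)
                * ((2 : ZMod (2 ^ n)) ^ (n - m) * c * ((2 : ZMod (2 ^ n)) ^ (n - m) * d))
              = ((2 : ZMod (2 ^ n)) ^ (m - 1) * (2 : ZMod (2 ^ n)) ^ (n - m)
                * (2 : ZMod (2 ^ n)) ^ (n - m)) * (c * d) := by
            ring
          rw [e, ← pow_add, ← pow_add, hpow0 _ (by omega), zero_mul]
        have hx0 := hK _ hxK ?_
        · exact ⟨congrArg Prod.fst hx0, congrArg Prod.snd hx0⟩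
        · intro z hzK
          show (2 : ZMod (2 ^ n)) ^ (m - 1) * y.1 * z.2
              + (2 : ZMod (2 ^ n)) ^ (m - 1) * y.2 * z.1 = 0
          have e1 : (2 : ZMod (2 ^ n)) ^ (m - 1) * y.1 * z.2
              + (2 : ZMod (2 ^ n)) ^ (m - 1) * y.2 * z.1
              = (2 : ZMod (2 ^ n)) ^ (m - 1) * (y.1 * z.2)
              + (2 : ZMod (2 ^ n)) ^ (m - 1) * (y.2 * z.1) := by ring
          rw [e1, hmain _ _ (H y hyK).1 (H z hzK).2, hmain _ _ (H y hyK).2 (H z hzK).1,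
            add_zero]
      have down : ∀ j : ℕ, j ≤ n - 1 →
          ∀ y ∈ K, (2 : ZMod (2 ^ n)) ^ (n - 1 - j) * y.1 = 0
            ∧ (2 : ZMod (2 ^ n)) ^ (n - 1 - j) * y.2 = 0 := by
        intro j
        induction j with
        | zero =>
            intro _ y hy
            exact ⟨heven_zero y.1 (hcoord y hy).1, heven_zero y.2 (hcoord y hy).2⟩
        | succ j ih =>
            intro hj y hy
            have h' := step (n - 1 - j) (by omega) (by omega) (ih (by omega)) y hy
            rwa [show n - 1 - j - 1 = n - 1 - (j + 1) by omega] at h'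
      rw [eq_bot_iff]
      intro y hy
      have h0 := down (n - 1) le_rfl y hy
      rw [show n - 1 - (n - 1) = 0 by omega, pow_zero, one_mul, one_mul] at h0
      have : y = 0 := Prod.ext h0.1 h0.2
      simpa [AddSubgroup.mem_bot] using this

/-- Group-theoretic content of Theorem 4.6(i): for `Γ = (ℤ/2ⁿℤ)²` with the
pairing `S((a,b),(c,d)) = ζ^(ad+bc)`, no proper nontrivial subgroup carries a
nondegenerate restriction of `S` and splits `Γ` as `K × K^⊥`; in particular
every subgroup on which `S` is nondegenerate is trivial or everything. -/
theorem stmt_16 (n : ℕ) (hn : 2 ≤ n)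
    (pair : (ZMod (2 ^ n) × ZMod (2 ^ n)) → (ZMod (2 ^ n) × ZMod (2 ^ n)) → ℂ)
    (hpair : ∀ x y, pair x y =
      Complex.exp (2 * Real.pi * Complex.I / (2 ^ n : ℕ)) ^
        ((x.1 * y.2 + x.2 * y.1).val))
    (perp : AddSubgroup (ZMod (2 ^ n) × ZMod (2 ^ n)) →
            AddSubgroup (ZMod (2 ^ n) × ZMod (2 ^ n)))
    (hperp : ∀ K x, x ∈ perp K ↔ ∀ y ∈ K, pair x y = 1) :
    (¬ ∃ K : AddSubgroup (ZMod (2 ^ n) × ZMod (2 ^ n)),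
        1 < Nat.card K ∧ Nat.card K < Nat.card (ZMod (2 ^ n) × ZMod (2 ^ n)) ∧
        (∀ x ∈ K, (∀ y ∈ K, pair x y = 1) → x = 0) ∧
        Nonempty ((ZMod (2 ^ n) × ZMod (2 ^ n)) ≃+ (K × perp K))) ∧
    ∀ K : AddSubgroup (ZMod (2 ^ n) × ZMod (2 ^ n)),
      (∀ x ∈ K, (∀ y ∈ K, pair x y = 1) → x = 0) → K = ⊥ ∨ K = ⊤ := by
  haveI : NeZero ((2:ℕ) ^ n) := ⟨pow_ne_zero _ two_ne_zero⟩
  have hprim : IsPrimitiveRoot (Complex.exp (2 * Real.pi * Complex.I / (2 ^ n : ℕ))) (2 ^ n) :=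
    Complex.isPrimitiveRoot_exp (2 ^ n) (pow_ne_zero _ two_ne_zero)
  have pair_iff : ∀ x y, pair x y = 1 ↔ (x.1 * y.2 + x.2 * y.1 : ZMod (2 ^ n)) = 0 := by
    intro x y
    rw [hpair, hprim.pow_eq_one_iff_dvd]
    constructor
    · intro h
      exact (ZMod.val_eq_zero _).1 (Nat.eq_zero_of_dvd_of_lt h (ZMod.val_lt _))
    · intro h
      rw [h, ZMod.val_zero]
      exact dvd_zero _
  have key : ∀ K : AddSubgroup (ZMod (2 ^ n) × ZMod (2 ^ n)),
      (∀ x ∈ K, (∀ y ∈ K, pair x y = 1) → x = 0) → K = ⊥ ∨ K = ⊤ := by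
    intro K hnd
    refine stmt16_main n hn K ?_
    intro x hx h0
    exact hnd x hx fun y hy => (pair_iff x y).2 (h0 y hy)
  refine ⟨?_, key⟩
  rintro ⟨K, h1, h2, hnd, -⟩
  rcases key K hnd with rfl | rfl
  · rw [AddSubgroup.card_bot] at h1
    exact absurd h1 (by omega)
  · rw [AddSubgroup.card_top] at h2
    exact absurd h2 (by omega)
end
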